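/- arXiv:1405.2421 — 2 statements merged into one kernel-verified Lean document; each statement's English description precedes it below -/
import Mathlib

section
/- Let A ∈ ℝ^{n×n}, B ∈ ℝ^{n×m}, C ∈ ℝ^{p×n} with p ≤ m. If the pair (A,B) is controllable and the matrix [[A, B],[C, 0]] (of size (n+p)×(n+m)) has rank n+p, then the augmented pair (Â, B̂) with Â = [[A, 0],[-C, 0]] ∈ ℝ^{(n+p)×(n+p)} and B̂ = [[B],[0]] ∈ ℝ^{(n+p)×m} is controllable. -/
open Matrix

/-- Controllability matrix `[B, AB, ..., A^{card ι - 1} B]` of a pair `(A, B)`. -/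
def ctrb {ι : Type} [Fintype ι] [DecidableEq ι] {m : ℕ}
    (A : Matrix ι ι ℝ) (B : Matrix ι (Fin m) ℝ) :
    Matrix ι (Fin (Fintype.card ι) × Fin m) ℝ :=
  Matrix.of fun i kj => (A ^ (kj.1 : ℕ) * B) i kj.2

lemma aux_rank_iff {ι κ : Type} [Fintype ι] [Fintype κ] (M : Matrix ι κ ℝ) :
    M.rank = Fintype.card ι ↔ ∀ v : ι → ℝ, M.vecMul v = 0 → v = 0 := by
  have h1 : (∀ v : ι → ℝ, M.vecMul v = 0 → v = 0) ↔ LinearMap.ker Mᵀ.mulVecLin = ⊥ := by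
    rw [LinearMap.ker_eq_bot']
    constructor
    · intro h v hv
      refine h v ?_
      simpa using hv
    · intro h v hv
      exact h v (by simpa [Matrix.mulVecLin_apply, Matrix.mulVec_transpose] using hv)
  rw [h1, ← Matrix.rank_transpose, Matrix.rank]
  have h2 := LinearMap.finrank_range_add_finrank_ker (Mᵀ.mulVecLin)
  rw [Module.finrank_pi] at h2
  constructor
  · intro h
    have h0 : Module.finrank ℝ (LinearMap.ker Mᵀ.mulVecLin) = 0 := by omega
    exact Submodule.finrank_eq_zero.mp h0
  · intro h
    rw [h, finrank_bot] at h2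
    omega

lemma aux_pow {n p : ℕ} (A : Matrix (Fin n) (Fin n) ℝ) (C : Matrix (Fin p) (Fin n) ℝ) (k : ℕ) :
    (fromBlocks A 0 (-C) (0 : Matrix (Fin p) (Fin p) ℝ)) ^ (k + 1) =
      fromBlocks (A ^ (k + 1)) 0 (-(C * A ^ k)) 0 := by
  induction k with
  | zero => simp
  | succ k ih =>
    rw [pow_succ, ih, Matrix.fromBlocks_multiply]
    simp [pow_succ, Matrix.mul_assoc]

lemma aux_ctrb_left {ι : Type} [Fintype ι] [DecidableEq ι] {m : ℕ}
    (A : Matrix ι ι ℝ) (B : Matrix ι (Fin m) ℝ) (v : ι → ℝ) :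
    (ctrb A B).vecMul v = 0 ↔
      ∀ k : Fin (Fintype.card ι), (A ^ (k : ℕ) * B).vecMul v = 0 := by
  constructor
  · intro h k
    funext j
    exact congrFun h (k, j)
  · intro h
    funext kj
    exact congrFun (h kj.1) kj.2

theorem stmt5 {n m p : ℕ} (hpm : p ≤ m)
    (A : Matrix (Fin n) (Fin n) ℝ) (B : Matrix (Fin n) (Fin m) ℝ)
    (C : Matrix (Fin p) (Fin n) ℝ)
    (hctrb : (ctrb A B).rank = n)
    (hrank : (Matrix.fromBlocks A B C 0).rank = n + p) :
    (ctrb (Matrix.fromBlocks A 0 (-C) (0 : Matrix (Fin p) (Fin p) ℝ))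
        (Matrix.of (Sum.elim B (0 : Matrix (Fin p) (Fin m) ℝ)))).rank = n + p := by
  have hcard : Fintype.card (Fin n ⊕ Fin p) = n + p := by simp
  rw [show n + p = Fintype.card (Fin n ⊕ Fin p) from hcard.symm, aux_rank_iff]
  intro v hv
  set Bh : Matrix (Fin n ⊕ Fin p) (Fin m) ℝ :=
    Matrix.of (Sum.elim B (0 : Matrix (Fin p) (Fin m) ℝ)) with hBh
  rcases Nat.eq_zero_or_pos (n + p) with hnp | hnp
  · funext i
    cases i with
    | inl a => exact absurd a.2 (by omega)
    | inr b => exact absurd b.2 (by omega)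
  rw [aux_ctrb_left] at hv
  set x : Fin n → ℝ := v ∘ Sum.inl with hx
  set y : Fin p → ℝ := v ∘ Sum.inr with hy
  have hvxy : v = Sum.elim x y := by funext i; cases i <;> rfl
  -- vecMul through Bh
  have hBhmul : ∀ u : Fin n ⊕ Fin p → ℝ,
      Bh.vecMul u = B.vecMul (u ∘ Sum.inl) := by
    intro u
    funext j
    simp [hBh, Matrix.vecMul, dotProduct, Fintype.sum_sum_type]
    change ∑ a₁, u (Sum.inl a₁) * B a₁ j + ∑ a₂, u (Sum.inr a₂) * (0 : ℝ) = _
    simp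
  -- condition at k = 0
  have h0 : B.vecMul x = 0 := by
    have := hv ⟨0, by rw [hcard]; omega⟩
    simpa [hBhmul] using this
  -- conditions at k+1
  have h1 : ∀ k : ℕ, k + 1 < n + p →
      ((A ^ k * B).vecMul ((A.vecMul x) - (C.vecMul y))) = 0 := by
    intro k hk
    have := hv ⟨k + 1, by rw [hcard]; omega⟩
    rw [show ((⟨k + 1, by rw [hcard]; omega⟩ : Fin (Fintype.card (Fin n ⊕ Fin p))) : ℕ) = k + 1 from rfl,
      ← Matrix.vecMul_vecMul, aux_pow, Matrix.vecMul_fromBlocks, hBhmul] at this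
    simp only [Sum.elim_comp_inl] at this
    rw [← Matrix.vecMul_vecMul]
    have e1 : (x ᵥ* A ^ (k+1) + y ᵥ* -(C * A ^ k)) =
        ((A.vecMul x) - (C.vecMul y)) ᵥ* A ^ k := by
      rw [Matrix.sub_vecMul, pow_succ', ← Matrix.vecMul_vecMul, Matrix.vecMul_neg,
        ← Matrix.vecMul_vecMul, sub_eq_add_neg]
    rw [← e1]
    exact this
  rcases Nat.eq_zero_or_pos p with hp | hp
  · -- p = 0 : y is trivial
    subst hp
    have hyC : C.vecMul y = 0 := by
      funext j; simp [Matrix.vecMul, dotProduct]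
    have hxc : (ctrb A B).vecMul x = 0 := by
      rw [aux_ctrb_left]
      intro k
      rcases Nat.eq_zero_or_pos (k : ℕ) with hk0 | hk0
      · rw [hk0]; simpa using h0
      · obtain ⟨k', hk'⟩ := Nat.exists_eq_add_of_lt hk0
        have hklt : (k : ℕ) < n := by simpa using k.2
        have h2 := h1 k' (by omega)
        rw [hyC, sub_zero, Matrix.vecMul_vecMul, ← Matrix.mul_assoc, ← pow_succ'] at h2
        rw [show (k : ℕ) = k' + 1 by omega]
        exact h2
    have hx0 : x = 0 := by
      have := (aux_rank_iff (ctrb A B)).mp (by simpa using hctrb)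
      exact this x hxc
    rw [hvxy, hx0]
    funext i
    cases i with
    | inl a => rfl
    | inr b => exact b.elim0
  · -- p ≥ 1
    have hw : (A.vecMul x) - (C.vecMul y) = 0 := by
      have hwc : (ctrb A B).vecMul ((A.vecMul x) - (C.vecMul y)) = 0 := by
        rw [aux_ctrb_left]
        intro k
        have hklt : (k : ℕ) < n := by simpa using k.2
        exact h1 k (by omega)
      have := (aux_rank_iff (ctrb A B)).mp (by simpa using hctrb)
      exact this _ hwc
    -- use hrank
    have hu : (Matrix.fromBlocks A B C 0).vecMul (Sum.elim x (-y)) = 0 := by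
      rw [Matrix.vecMul_fromBlocks]
      simp only [Sum.elim_comp_inl, Sum.elim_comp_inr]
      rw [Matrix.neg_vecMul]
      funext i
      cases i with
      | inl a =>
        have := congrFun hw a
        simp only [Sum.elim_inl, Pi.add_apply, Pi.neg_apply, Pi.sub_apply, Pi.zero_apply] at this ⊢
        linarith
      | inr b =>
        have := congrFun h0 b
        simp only [Sum.elim_inr, Pi.add_apply, Pi.zero_apply] at this ⊢
        simp [Matrix.vecMul_zero]
        exact this
    have hfull := (aux_rank_iff (Matrix.fromBlocks A B C 0)).mp (by simpa using hrank)
    have hz := hfull _ hu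
    rw [hvxy]
    funext i
    cases i with
    | inl a => exact congrFun hz (Sum.inl a)
    | inr b =>
      have := congrFun hz (Sum.inr b)
      simp only [Sum.elim_inr, Pi.neg_apply] at this
      simpa [Sum.elim_inr] using (neg_eq_zero.mp this)
end

section
/- Let N ≥ 1, and for i = 1,...,N let Â_ii, B_i, K_i be matrices and P_i symmetric positive definite with (Â_ii + B_i K_i)ᵀ P_i + P_i (Â_ii + B_i K_i) ≺ 0. Let Â be the block matrix with diagonal blocks Â_ii and off-diagonal blocks Â_ij, and suppose Â_C (the off-diagonal part) satisfies Â_C = S·diag(P₁,...,P_N) for some skew-symmetric S. Then the closed-loop matrix Â + diag(B₁K₁,...,B_N K_N) is Hurwitz (all eigenvalues have negative real part). -/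
open Matrix

private lemma coe_quad {n : Type*} [Fintype n] (Q : Matrix n n ℝ) (a b : n → ℝ) :
    (fun i => ((a i : ℂ))) ⬝ᵥ ((Q.map Complex.ofReal) *ᵥ (fun i => ((b i : ℂ))))
      = ((a ⬝ᵥ (Q *ᵥ b) : ℝ) : ℂ) := by
  simp only [dotProduct, mulVec, map_apply]
  push_cast
  rfl

private lemma quad_decomp {n : Type*} [Fintype n] (Q : Matrix n n ℝ) (hsym : Qᵀ = Q) (v : n → ℂ) :
    star v ⬝ᵥ ((Q.map Complex.ofReal) *ᵥ v)
      = (((fun i => (v i).re) ⬝ᵥ (Q *ᵥ fun i => (v i).re)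
          + (fun i => (v i).im) ⬝ᵥ (Q *ᵥ fun i => (v i).im) : ℝ) : ℂ) := by
  set x : n → ℝ := fun i => (v i).re with hx
  set y : n → ℝ := fun i => (v i).im with hy
  have hvd : v = (fun i => ((x i : ℂ))) + Complex.I • (fun i => ((y i : ℂ))) := by
    funext i
    simp only [Pi.add_apply, Pi.smul_apply, smul_eq_mul]
    rw [mul_comm]
    exact (Complex.re_add_im (v i)).symm
  have hst : star v = (fun i => ((x i : ℂ))) - Complex.I • (fun i => ((y i : ℂ))) := by
    funext i
    simp only [Pi.star_apply, Pi.sub_apply, Pi.smul_apply, smul_eq_mul]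
    apply Complex.ext <;> simp [x, y]
  have hxy : x ⬝ᵥ (Q *ᵥ y) = y ⬝ᵥ (Q *ᵥ x) := by
    rw [dotProduct_mulVec]
    conv_lhs => rw [← hsym]
    rw [vecMul_transpose, dotProduct_comm]
  rw [hst]
  conv_lhs => rw [hvd]
  simp only [mulVec_add, mulVec_smul, sub_dotProduct, dotProduct_add, dotProduct_smul,
    smul_dotProduct, smul_eq_mul, coe_quad]
  rw [hxy]
  push_cast
  ring_nf
  simp [Complex.I_sq]

private lemma quad_pos_complex {n : Type*} [Fintype n] (Q : Matrix n n ℝ) (hsym : Qᵀ = Q)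
    (hpos : ∀ x : n → ℝ, x ≠ 0 → 0 < x ⬝ᵥ (Q *ᵥ x)) (v : n → ℂ) (hv : v ≠ 0) :
    ∃ c : ℝ, 0 < c ∧ star v ⬝ᵥ ((Q.map Complex.ofReal) *ᵥ v) = (c : ℂ) := by
  have hnonneg : ∀ z : n → ℝ, 0 ≤ z ⬝ᵥ (Q *ᵥ z) := by
    intro z
    rcases eq_or_ne z 0 with h | h
    · simp [h]
    · exact (hpos z h).le
  refine ⟨_, ?_, quad_decomp Q hsym v⟩
  have hxyne : (fun i => (v i).re) ≠ 0 ∨ (fun i => (v i).im) ≠ 0 := by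
    by_contra h
    push_neg at h
    apply hv
    funext i
    have h1 : (v i).re = 0 := congrFun h.1 i
    have h2 : (v i).im = 0 := congrFun h.2 i
    exact Complex.ext h1 h2
  rcases hxyne with h | h
  · have := hpos _ h
    have := hnonneg (fun i => (v i).im)
    linarith
  · have := hpos _ h
    have := hnonneg (fun i => (v i).re)
    linarith

private lemma blk_quad {N k : ℕ} (M : Fin N → Matrix (Fin k) (Fin k) ℝ) (v : Fin N × Fin k → ℝ) :
    v ⬝ᵥ ((Matrix.of fun p q : Fin N × Fin k => if p.1 = q.1 then M p.1 p.2 q.2 else 0) *ᵥ v)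
      = ∑ i, (fun a => v (i, a)) ⬝ᵥ (M i *ᵥ fun a => v (i, a)) := by
  simp [dotProduct, mulVec, Fintype.sum_prod_type, ite_mul, zero_mul, Finset.sum_ite_eq,
    Finset.mul_sum]

private lemma blk_mul {N k : ℕ} (M M' : Fin N → Matrix (Fin k) (Fin k) ℝ) :
    (Matrix.of fun p q : Fin N × Fin k => if p.1 = q.1 then M p.1 p.2 q.2 else 0) *
      (Matrix.of fun p q : Fin N × Fin k => if p.1 = q.1 then M' p.1 p.2 q.2 else 0)
    = Matrix.of fun p q : Fin N × Fin k =>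
        if p.1 = q.1 then (M p.1 * M' p.1) p.2 q.2 else 0 := by
  ext ⟨i, a⟩ ⟨j, b⟩
  simp only [mul_apply, of_apply, Fintype.sum_prod_type, ite_mul, zero_mul, mul_ite, mul_zero]
  by_cases h : i = j
  · subst h
    simp [Finset.sum_ite_eq, mul_apply]
  · simp [Finset.sum_ite_eq, h]

private lemma blk_transpose {N k : ℕ} (M : Fin N → Matrix (Fin k) (Fin k) ℝ) :
    (Matrix.of fun p q : Fin N × Fin k => if p.1 = q.1 then M p.1 p.2 q.2 else 0)ᵀ
    = Matrix.of fun p q : Fin N × Fin k => if p.1 = q.1 then (M p.1)ᵀ p.2 q.2 else 0 := by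
  ext ⟨i, a⟩ ⟨j, b⟩
  simp only [transpose_apply, of_apply]
  by_cases h : i = j
  · subst h; simp
  · simp [h, Ne.symm h]

private lemma eig_of_mem_spectrum {n : Type*} [Fintype n] [DecidableEq n] (A : Matrix n n ℂ)
    {μ : ℂ} (hμ : μ ∈ spectrum ℂ A) : ∃ v : n → ℂ, v ≠ 0 ∧ A *ᵥ v = μ • v := by
  rw [spectrum.mem_iff] at hμ
  have hdet : (algebraMap ℂ (Matrix n n ℂ) μ - A).det = 0 := by
    by_contra h
    exact hμ ((Matrix.isUnit_iff_isUnit_det _).mpr (Ne.isUnit h))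
  obtain ⟨v, hv0, hv⟩ := (Matrix.exists_mulVec_eq_zero_iff).mpr hdet
  refine ⟨v, hv0, ?_⟩
  rw [sub_mulVec, sub_eq_zero, Algebra.algebraMap_eq_smul_one, smul_mulVec,
    one_mulVec] at hv
  exact hv.symm

private lemma map_mulVec_star {n : Type*} [Fintype n] (R : Matrix n n ℝ) (w : n → ℂ) :
    (R.map Complex.ofReal) *ᵥ (star w) = star ((R.map Complex.ofReal) *ᵥ w) := by
  funext i
  simp only [Pi.star_apply, mulVec, dotProduct, map_apply, Complex.star_def, map_sum,
    _root_.map_mul, Complex.conj_ofReal]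

theorem stmt14 (N k m : ℕ) (hN : 1 ≤ N)
    (Ab : Fin N → Fin N → Matrix (Fin k) (Fin k) ℝ)
    (B : Fin N → Matrix (Fin k) (Fin m) ℝ) (K : Fin N → Matrix (Fin m) (Fin k) ℝ)
    (P : Fin N → Matrix (Fin k) (Fin k) ℝ) (hP : ∀ i, (P i).PosDef)
    (hLyap : ∀ i,
      (-((Ab i i + B i * K i)ᵀ * P i + P i * (Ab i i + B i * K i))).PosDef)
    (S : Matrix (Fin N × Fin k) (Fin N × Fin k) ℝ) (hS : Sᵀ = -S)
    (hAC : (Matrix.of fun p q : Fin N × Fin k =>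
        if p.1 = q.1 then 0 else Ab p.1 q.1 p.2 q.2)
      = S * Matrix.of fun p q : Fin N × Fin k =>
        if p.1 = q.1 then P p.1 p.2 q.2 else 0) :
    ∀ μ ∈ spectrum ℂ
      (((Matrix.of fun p q : Fin N × Fin k => Ab p.1 q.1 p.2 q.2)
        + Matrix.of fun p q : Fin N × Fin k =>
            if p.1 = q.1 then (B p.1 * K p.1) p.2 q.2 else 0).map Complex.ofReal),
      μ.re < 0 := by
  intro μ hμ
  classical
  set G : Fin N → Matrix (Fin k) (Fin k) ℝ := fun i => Ab i i + B i * K i with hG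
  set L : Fin N → Matrix (Fin k) (Fin k) ℝ := fun i => (G i)ᵀ * P i + P i * G i with hL
  set Pb : Matrix (Fin N × Fin k) (Fin N × Fin k) ℝ :=
    Matrix.of fun p q : Fin N × Fin k => if p.1 = q.1 then P p.1 p.2 q.2 else 0 with hPbdef
  set Acl : Matrix (Fin N × Fin k) (Fin N × Fin k) ℝ :=
    (Matrix.of fun p q : Fin N × Fin k => Ab p.1 q.1 p.2 q.2)
      + Matrix.of fun p q : Fin N × Fin k =>
          if p.1 = q.1 then (B p.1 * K p.1) p.2 q.2 else 0 with hAcldef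
  -- transposes of the real symmetric matrices
  have hPs : ∀ i, (P i)ᵀ = P i := fun i => by
    have := (hP i).1
    rwa [IsHermitian, conjTranspose_eq_transpose_of_trivial] at this
  have hLs : ∀ i, (L i)ᵀ = L i := by
    intro i
    simp only [hL, transpose_add, transpose_mul, transpose_transpose, hPs]
    abel
  have hPbsym : Pbᵀ = Pb := by
    rw [hPbdef, blk_transpose]
    ext ⟨i, a⟩ ⟨j, b⟩
    by_cases h : i = j
    · subst h
      simp only [of_apply, if_pos rfl]
      exact congrFun (congrFun (hPs i) a) b
    · simp [h]
  -- splitting of the closed loop matrix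
  have hsplit : Acl
      = (Matrix.of fun p q : Fin N × Fin k => if p.1 = q.1 then G p.1 p.2 q.2 else 0)
        + S * Pb := by
    rw [← hAC]
    ext ⟨i, a⟩ ⟨j, b⟩
    by_cases h : i = j
    · subst h; simp [hAcldef, hG]
    · simp [hAcldef, h]
  -- Lyapunov identity
  have hMid : Aclᵀ * Pb + Pb * Acl
      = Matrix.of fun p q : Fin N × Fin k => if p.1 = q.1 then L p.1 p.2 q.2 else 0 := by
    rw [hsplit, transpose_add, transpose_mul, hS, hPbsym, blk_transpose]
    rw [show ((Matrix.of fun p q : Fin N × Fin k =>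
          if p.1 = q.1 then (G p.1)ᵀ p.2 q.2 else 0) + Pb * -S) * Pb
        + Pb * ((Matrix.of fun p q : Fin N × Fin k =>
            if p.1 = q.1 then G p.1 p.2 q.2 else 0) + S * Pb)
      = (Matrix.of fun p q : Fin N × Fin k =>
          if p.1 = q.1 then (G p.1)ᵀ p.2 q.2 else 0) * Pb
        + Pb * (Matrix.of fun p q : Fin N × Fin k =>
            if p.1 = q.1 then G p.1 p.2 q.2 else 0) from by noncomm_ring]
    rw [hPbdef, blk_mul (fun i => (G i)ᵀ) P, blk_mul P G]
    ext ⟨i, a⟩ ⟨j, b⟩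
    by_cases h : i = j
    · subst h; simp [hL]
    · simp [h]
  -- positivity of the block quadratic forms
  have hblkpos : ∀ (M : Fin N → Matrix (Fin k) (Fin k) ℝ), (∀ i, (M i).PosDef) →
      ∀ w : Fin N × Fin k → ℝ, w ≠ 0 →
        0 < w ⬝ᵥ ((Matrix.of fun p q : Fin N × Fin k =>
            if p.1 = q.1 then M p.1 p.2 q.2 else 0) *ᵥ w) := by
    intro M hM w hw
    rw [blk_quad]
    have hex : ∃ p, w p ≠ 0 := by
      by_contra hcon
      push_neg at hcon
      exact hw (funext hcon)
    obtain ⟨⟨i0, a0⟩, hp⟩ := hex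
    refine Finset.sum_pos' (fun i _ => ?_) ⟨i0, Finset.mem_univ _, ?_⟩
    · have := (hM i).posSemidef.dotProduct_mulVec_nonneg (fun a => w (i, a))
      simpa using this
    · have hne : (fun a => w (i0, a)) ≠ 0 := fun h0 => hp (congrFun h0 a0)
      have := (hM i0).dotProduct_mulVec_pos hne
      simpa using this
  -- eigenvector
  obtain ⟨v, hv0, hvA⟩ := eig_of_mem_spectrum _ hμ
  -- the two quadratic-form evaluations
  have hPbq := quad_pos_complex Pb hPbsym
    (by simpa [hPbdef] using hblkpos P hP) v hv0
  obtain ⟨e, he, heq⟩ := hPbq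
  have hnegLsym : (Matrix.of fun p q : Fin N × Fin k =>
      if p.1 = q.1 then (-(L p.1)) p.2 q.2 else 0)ᵀ
      = Matrix.of fun p q : Fin N × Fin k => if p.1 = q.1 then (-(L p.1)) p.2 q.2 else 0 := by
    rw [blk_transpose (fun i => -(L i))]
    ext ⟨i, a⟩ ⟨j, b⟩
    by_cases h : i = j
    · subst h
      simp only [of_apply, if_true, transpose_apply, Matrix.neg_apply, neg_inj]
      exact congrFun (congrFun (hLs i) a) b
    · simp [h]
  have hQq := quad_pos_complex _ hnegLsym
    (hblkpos (fun i => -(L i)) (fun i => by simpa [hL, hG] using hLyap i)) v hv0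
  obtain ⟨c, hc, hcq⟩ := hQq
  -- relate blk L map to blk (-L) map
  have hmapneg : (Matrix.of fun p q : Fin N × Fin k =>
        if p.1 = q.1 then L p.1 p.2 q.2 else 0).map Complex.ofReal
      = -((Matrix.of fun p q : Fin N × Fin k =>
          if p.1 = q.1 then (-(L p.1)) p.2 q.2 else 0).map Complex.ofReal) := by
    ext ⟨i, a⟩ ⟨j, b⟩
    by_cases h : i = j
    · subst h; simp
    · simp [h]
  -- evaluate t := star v ⬝ᵥ ((Aclᵀ * Pb + Pb * Acl).map ofReal *ᵥ v) two ways
  have hway1 : star v ⬝ᵥ (((Aclᵀ * Pb + Pb * Acl).map Complex.ofReal) *ᵥ v) = (-c : ℂ) := by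
    rw [hMid, hmapneg, neg_mulVec, dotProduct_neg, hcq]
  have hmapdist : (Aclᵀ * Pb + Pb * Acl).map Complex.ofReal
      = (Acl.map Complex.ofReal)ᵀ * (Pb.map Complex.ofReal)
        + (Pb.map Complex.ofReal) * (Acl.map Complex.ofReal) := by
    have h1 : ∀ (X Y : Matrix (Fin N × Fin k) (Fin N × Fin k) ℝ),
        (X * Y).map Complex.ofReal = X.map Complex.ofReal * Y.map Complex.ofReal := by
      intro X Y
      exact Matrix.map_mul (f := Complex.ofRealHom)
    rw [Matrix.map_add _ (by push_cast; simp), h1, h1, transpose_map]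
  have hway2 : star v ⬝ᵥ (((Aclᵀ * Pb + Pb * Acl).map Complex.ofReal) *ᵥ v)
      = ((starRingEnd ℂ) μ + μ) * (e : ℂ) := by
    rw [hmapdist, add_mulVec, dotProduct_add]
    have hterm2 : star v ⬝ᵥ ((Pb.map Complex.ofReal * Acl.map Complex.ofReal) *ᵥ v)
        = μ * (e : ℂ) := by
      rw [← mulVec_mulVec, hvA, mulVec_smul, dotProduct_smul, smul_eq_mul, heq]
    have hterm1 : star v ⬝ᵥ (((Acl.map Complex.ofReal)ᵀ * Pb.map Complex.ofReal) *ᵥ v)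
        = (starRingEnd ℂ) μ * (e : ℂ) := by
      rw [← mulVec_mulVec, dotProduct_mulVec, vecMul_transpose, map_mulVec_star, hvA]
      rw [star_smul, smul_dotProduct, heq]
      simp [Complex.star_def]
    rw [hterm1, hterm2]
    ring
  have hfinal : ((starRingEnd ℂ) μ + μ) * (e : ℂ) = (-c : ℂ) := by
    rw [← hway2, hway1]
  have hre := congrArg Complex.re hfinal
  simp only [Complex.add_re, Complex.mul_re, Complex.add_im, Complex.conj_re, Complex.conj_im,
    Complex.ofReal_re, Complex.ofReal_im, Complex.neg_re, mul_zero, sub_zero] at hre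
  nlinarith [hc, he, hre]
end
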